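/- Let H be a group with a central element z of order exactly 2 such that every commutator ⁅g,h⁆ = g h g⁻¹ h⁻¹ (for g, h ∈ H) lies in {1, z}, and assume the center Z(H) has finite index in H. Call a homomorphism χ : Z(H) → ℂˣ genuine if χ(z) = −1, and call a finite-dimensional complex representation of H genuine if z acts by −Id. Then for every genuine character χ of Z(H) there exists, up to isomorphism, a unique finite-dimensional irreducible complex representation π(χ) of H whose restriction to Z(H) is a direct sum of copies of χ; moreover every finite-dimensional irreducible genuine complex representation of H is isomorphic to π(χ) for exactly one genuine character χ. Hence χ ↦ π(χ) is a bijection from the set of genuine characters of Z(H) onto the set of isomorphism classes of finite-dimensional irreducible genuine complex representations of H. -/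

import Mathlib

/-- A finite-dimensional complex representation of a group `H`. -/
structure FinDimRep (H : Type) [Group H] where
  carrier : Type
  [acg : AddCommGroup carrier]
  [mod : Module ℂ carrier]
  [fd : FiniteDimensional ℂ carrier]
  ρ : Representation ℂ H carrier

attribute [instance] FinDimRep.acg FinDimRep.mod FinDimRep.fd

variable {H : Type} [Group H]

/-- Irreducibility: the space is nonzero and has no proper nonzero invariant subspace. -/
def FinDimRep.IsIrreducible (π : FinDimRep H) : Prop :=
  (⊤ : Submodule ℂ π.carrier) ≠ ⊥ ∧
  ∀ U : Submodule ℂ π.carrier, (∀ g : H, ∀ x ∈ U, π.ρ g x ∈ U) → U = ⊥ ∨ U = ⊤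

/-- The restriction of `π` to the center is a direct sum of copies of the character
`χ`, i.e. every central element `s` acts by the scalar `χ(s)`. -/
def FinDimRep.RestrictsTo (π : FinDimRep H) (χ : Subgroup.center H →* ℂˣ) : Prop :=
  ∀ s : Subgroup.center H,
    π.ρ (s : H) = (χ s : ℂ) • (1 : π.carrier →ₗ[ℂ] π.carrier)

/-- Isomorphism of representations. -/
def FinDimRep.Iso (π π' : FinDimRep H) : Prop :=
  ∃ e : π.carrier ≃ₗ[ℂ] π'.carrier, ∀ (g : H) (x : π.carrier), e (π.ρ g x) = π'.ρ g (e x)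

open scoped commutatorElement

open LinearMap

section Helpers

lemma scalar_unique {M : Type*} [AddCommGroup M] [Module ℂ M] [Nontrivial M] {a b : ℂ}
    (h : a • (1 : M →ₗ[ℂ] M) = b • (1 : M →ₗ[ℂ] M)) : a = b := by
  obtain ⟨x, hx⟩ := exists_ne (0 : M)
  have := LinearMap.congr_fun h x
  simp only [LinearMap.smul_apply, Module.End.one_apply] at this
  have h2 : (a - b) • x = 0 := by rw [sub_smul, this, sub_self]
  rcases smul_eq_zero.mp h2 with h3 | h3
  · exact sub_eq_zero.mp h3
  · exact absurd h3 hx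

lemma trace_left_right {V W : Type*} [AddCommGroup V] [Module ℂ V] [FiniteDimensional ℂ V]
    [AddCommGroup W] [Module ℂ W] [FiniteDimensional ℂ W]
    (X : W →ₗ[ℂ] W) (Y : V →ₗ[ℂ] V) (P : (V →ₗ[ℂ] W) →ₗ[ℂ] (V →ₗ[ℂ] W))
    (hP : ∀ S, P S = X ∘ₗ S ∘ₗ Y) :
    LinearMap.trace ℂ _ P = LinearMap.trace ℂ W X * LinearMap.trace ℂ V Y := by
  set e := dualTensorHomEquiv ℂ V W with he
  have happ : ∀ t, e t = dualTensorHom ℂ V W t := by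
    intro t
    rw [he]
    rfl
  have key : ∀ t, P (e t) = e (TensorProduct.map Y.dualMap X t) := by
    intro t
    induction t using TensorProduct.induction_on with
    | zero => rw [map_zero, map_zero, map_zero, map_zero]
    | tmul f w =>
        rw [hP, TensorProduct.map_tmul, happ, happ]
        ext v
        simp [LinearMap.dualMap_apply]
    | add s t hs ht => rw [map_add, map_add, map_add, map_add, hs, ht]
  have hPconj : P = e.conj (TensorProduct.map Y.dualMap X) := by
    refine LinearMap.ext fun S => ?_
    rw [LinearEquiv.conj_apply_apply]
    have h2 := key (e.symm S)
    rwa [e.apply_symm_apply] at h2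
  rw [hPconj, LinearMap.trace_conj', LinearMap.trace_tensorProduct',
    LinearMap.dualMap_def, LinearMap.trace_transpose', mul_comm]

end Helpers

namespace FinDimRep

variable {H : Type} [Group H]

lemma nontrivial_of_irr (π : FinDimRep H) (h : π.IsIrreducible) : Nontrivial π.carrier := by
  rcases subsingleton_or_nontrivial π.carrier with hs | hn
  · exact absurd (Subsingleton.elim _ _) h.1
  · exact hn

lemma schur_iso (π π' : FinDimRep H) (h : π.IsIrreducible) (h' : π'.IsIrreducible)
    (T : π.carrier →ₗ[ℂ] π'.carrier) (hT : ∀ (g : H) (x : π.carrier), T (π.ρ g x) = π'.ρ g (T x))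
    (hT0 : T ≠ 0) : π.Iso π' := by
  have hker : LinearMap.ker T = ⊥ := by
    rcases h.2 (LinearMap.ker T) (fun g x hx => by
      rw [LinearMap.mem_ker] at hx ⊢
      rw [hT, hx, map_zero]) with h1 | h1
    · exact h1
    · exact absurd (LinearMap.ker_eq_top.mp h1) hT0
  have hrange : LinearMap.range T = ⊤ := by
    rcases h'.2 (LinearMap.range T) (fun g y hy => by
      obtain ⟨x, rfl⟩ := hy
      exact ⟨π.ρ g x, hT g x⟩) with h1 | h1
    · exact absurd (LinearMap.range_eq_bot.mp h1) hT0
    · exact h1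
  have hbij : Function.Bijective T :=
    ⟨LinearMap.ker_eq_bot.mp hker, LinearMap.range_eq_top.mp hrange⟩
  exact ⟨LinearEquiv.ofBijective T hbij, fun g x => hT g x⟩

lemma schur_scalar (π : FinDimRep H) (h : π.IsIrreducible) (f : π.carrier →ₗ[ℂ] π.carrier)
    (hf : ∀ g : H, f ∘ₗ π.ρ g = π.ρ g ∘ₗ f) : ∃ c : ℂ, f = c • (1 : π.carrier →ₗ[ℂ] π.carrier) := by
  haveI := π.nontrivial_of_irr h
  obtain ⟨c, hc⟩ := Module.End.exists_eigenvalue f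
  refine ⟨c, ?_⟩
  have hinv : ∀ (g : H), ∀ x ∈ Module.End.eigenspace f c, π.ρ g x ∈ Module.End.eigenspace f c := by
    intro g x hx
    rw [Module.End.mem_eigenspace_iff] at hx ⊢
    have := LinearMap.congr_fun (hf g) x
    simp only [LinearMap.comp_apply] at this
    rw [this, hx, map_smul]
  rcases h.2 _ hinv with h1 | h1
  · exact absurd h1 hc
  · ext x
    have hx : x ∈ Module.End.eigenspace f c := h1 ▸ Submodule.mem_top
    rw [Module.End.mem_eigenspace_iff] at hx
    simpa using hx

lemma trace_vanish (z : H) (hcomm : ∀ g h : H, ⁅g, h⁆ ∈ ({1, z} : Set H))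
    (π : FinDimRep H) (hgen : π.ρ z = -(1 : π.carrier →ₗ[ℂ] π.carrier))
    (g : H) (hg : g ∉ Subgroup.center H) :
    LinearMap.trace ℂ π.carrier (π.ρ g) = 0 := by
  have hh : ∃ h : H, h * g ≠ g * h := by
    by_contra hcon
    push_neg at hcon
    exact hg (Subgroup.mem_center_iff.mpr hcon)
  obtain ⟨h, hne⟩ := hh
  have hcz : ⁅h, g⁆ = z := by
    rcases hcomm h g with h1 | h1
    · exact absurd (commutatorElement_eq_one_iff_mul_comm.mp h1) hne
    · exact h1
  have hconj : h * g * h⁻¹ = z * g := by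
    have : h * g * h⁻¹ * g⁻¹ = z := hcz
    calc h * g * h⁻¹ = h * g * h⁻¹ * g⁻¹ * g := by group
    _ = z * g := by rw [this]
  have e1 : LinearMap.trace ℂ π.carrier (π.ρ (h * g * h⁻¹)) = LinearMap.trace ℂ π.carrier (π.ρ g) := by
    have : π.ρ (h * g * h⁻¹) = π.ρ h ∘ₗ (π.ρ g ∘ₗ π.ρ h⁻¹) := by
      rw [← Module.End.mul_eq_comp, ← Module.End.mul_eq_comp, ← map_mul, ← map_mul, mul_assoc]
    rw [this, LinearMap.trace_comp_comm']
    congr 1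
    rw [← Module.End.mul_eq_comp, ← Module.End.mul_eq_comp, ← map_mul, ← map_mul,
      mul_assoc, inv_mul_cancel, mul_one]
  have e2 : π.ρ (z * g) = -(π.ρ g) := by
    rw [map_mul, hgen]
    ext x; simp
  rw [hconj, e2, map_neg] at e1
  have h2 : (2 : ℂ) * LinearMap.trace ℂ π.carrier (π.ρ g) = 0 := by linear_combination -e1
  rcases mul_eq_zero.mp h2 with h3 | h3
  · exact absurd h3 two_ne_zero
  · exact h3


lemma genuine_of_restrictsTo {H : Type} [Group H] (z : H) (hz : z ∈ Subgroup.center H)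
    (χ : Subgroup.center H →* ℂˣ) (hχ : χ ⟨z, hz⟩ = -1)
    (π : FinDimRep H) (hres : π.RestrictsTo χ) :
    π.ρ z = -(1 : π.carrier →ₗ[ℂ] π.carrier) := by
  have := hres ⟨z, hz⟩
  rw [hχ] at this
  simpa using this

lemma iso_of_restrictsTo {H : Type} [Group H] (z : H) (hz : z ∈ Subgroup.center H)
    (hcomm : ∀ g h : H, ⁅g, h⁆ ∈ ({1, z} : Set H))
    (hfin : (Subgroup.center H).FiniteIndex)
    (χ : Subgroup.center H →* ℂˣ) (hχ : χ ⟨z, hz⟩ = -1)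
    (π π' : FinDimRep H) (h : π.IsIrreducible) (hres : π.RestrictsTo χ)
    (h' : π'.IsIrreducible) (hres' : π'.RestrictsTo χ) : π.Iso π' := by
  classical
  haveI := hfin
  haveI : Fintype (H ⧸ Subgroup.center H) := Fintype.ofFinite _
  set Q := H ⧸ Subgroup.center H with hQ
  haveI := π.nontrivial_of_irr h
  haveI := π'.nontrivial_of_irr h'
  have hgen : π.ρ z = -(1 : π.carrier →ₗ[ℂ] π.carrier) :=
    genuine_of_restrictsTo z hz χ hχ π hres
  have hgen' : π'.ρ z = -(1 : π'.carrier →ₗ[ℂ] π'.carrier) :=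
    genuine_of_restrictsTo z hz χ hχ π' hres'
  -- the averaging operator
  set A : Q → ((π.carrier →ₗ[ℂ] π'.carrier) →ₗ[ℂ] (π.carrier →ₗ[ℂ] π'.carrier)) :=
    fun c => (LinearMap.llcomp ℂ π.carrier π'.carrier π'.carrier (π'.ρ c.out)).comp
      (LinearMap.lcomp ℂ π'.carrier (π.ρ c.out⁻¹)) with hAdef
  have hA : ∀ c S, A c S = π'.ρ c.out ∘ₗ S ∘ₗ π.ρ c.out⁻¹ := fun c S => rfl
  set P : (π.carrier →ₗ[ℂ] π'.carrier) →ₗ[ℂ] (π.carrier →ₗ[ℂ] π'.carrier) :=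
    ∑ c : Q, A c with hPdef
  have hPapp : ∀ S, P S = ∑ c : Q, π'.ρ c.out ∘ₗ S ∘ₗ π.ρ c.out⁻¹ := by
    intro S
    rw [hPdef, LinearMap.sum_apply]
    exact Finset.sum_congr rfl fun c _ => hA c S
  -- independence of coset representative
  have hcoset : ∀ (t u : H), (QuotientGroup.mk t : Q) = QuotientGroup.mk u →
      ∀ S : π.carrier →ₗ[ℂ] π'.carrier,
      π'.ρ t ∘ₗ S ∘ₗ π.ρ t⁻¹ = π'.ρ u ∘ₗ S ∘ₗ π.ρ u⁻¹ := by
    intro t u htu S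
    have hs : t⁻¹ * u ∈ Subgroup.center H := QuotientGroup.eq.mp htu
    set σ : Subgroup.center H := ⟨t⁻¹ * u, hs⟩ with hσ
    have hu : u = t * (σ : H) := by rw [hσ]; simp
    have e1 : π'.ρ u = (χ σ : ℂ) • π'.ρ t := by
      rw [hu, map_mul, hres' σ]
      ext x; simp
    have e2 : π.ρ u⁻¹ = ((χ σ : ℂ))⁻¹ • π.ρ t⁻¹ := by
      have : u⁻¹ = ((σ⁻¹ : Subgroup.center H) : H) * t⁻¹ := by rw [hu]; simp
      rw [this, map_mul, hres σ⁻¹, map_inv]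
      ext x
      simp [Units.val_inv_eq_inv_val]
    rw [e1, e2]
    ext x
    simp only [LinearMap.comp_apply, LinearMap.smul_apply, map_smul, smul_smul]
    rw [inv_mul_cancel₀ (Units.ne_zero (χ σ)), one_smul]
  -- equivariance
  have hPinv : ∀ (g : H) (S : π.carrier →ₗ[ℂ] π'.carrier),
      π'.ρ g ∘ₗ P S ∘ₗ π.ρ g⁻¹ = P S := by
    intro g S
    have expand : π'.ρ g ∘ₗ P S ∘ₗ π.ρ g⁻¹
        = ∑ c : Q, π'.ρ g ∘ₗ (π'.ρ c.out ∘ₗ S ∘ₗ π.ρ c.out⁻¹) ∘ₗ π.ρ g⁻¹ := by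
      rw [hPapp]
      ext x
      simp [LinearMap.sum_apply, map_sum]
    rw [expand, hPapp]
    have term : ∀ c : Q, π'.ρ g ∘ₗ (π'.ρ c.out ∘ₗ S ∘ₗ π.ρ c.out⁻¹) ∘ₗ π.ρ g⁻¹
        = π'.ρ ((QuotientGroup.mk g * c).out) ∘ₗ S ∘ₗ π.ρ (((QuotientGroup.mk g * c).out)⁻¹) := by
      intro c
      have e1 : π'.ρ g ∘ₗ (π'.ρ c.out ∘ₗ S ∘ₗ π.ρ c.out⁻¹) ∘ₗ π.ρ g⁻¹
          = π'.ρ (g * c.out) ∘ₗ S ∘ₗ π.ρ ((g * c.out)⁻¹) := by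
        rw [map_mul, mul_inv_rev, map_mul]
        ext x; simp
      rw [e1]
      apply hcoset
      rw [QuotientGroup.mk_mul, QuotientGroup.out_eq', QuotientGroup.out_eq']
    calc (∑ c : Q, π'.ρ g ∘ₗ (π'.ρ c.out ∘ₗ S ∘ₗ π.ρ c.out⁻¹) ∘ₗ π.ρ g⁻¹)
        = ∑ c : Q, π'.ρ ((QuotientGroup.mk g * c).out) ∘ₗ S ∘ₗ π.ρ (((QuotientGroup.mk g * c).out)⁻¹) := by
          exact Finset.sum_congr rfl fun c _ => term c
      _ = ∑ c : Q, π'.ρ c.out ∘ₗ S ∘ₗ π.ρ (c.out⁻¹) := by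
          exact Fintype.sum_equiv (Equiv.mulLeft (QuotientGroup.mk g : Q))
            _ _ (fun c => rfl)
  -- trace computation
  have htrace : LinearMap.trace ℂ _ P =
      (Module.finrank ℂ π'.carrier : ℂ) * (Module.finrank ℂ π.carrier : ℂ) := by
    rw [hPdef, map_sum]
    have tA : ∀ c : Q, LinearMap.trace ℂ _ (A c)
        = LinearMap.trace ℂ π'.carrier (π'.ρ c.out) * LinearMap.trace ℂ π.carrier (π.ρ c.out⁻¹) :=
      fun c => trace_left_right _ _ _ (hA c)
    rw [Finset.sum_eq_single (1 : Q)]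
    · have hs : (1 : Q).out ∈ Subgroup.center H := by
        rw [← QuotientGroup.eq_one_iff]
        exact QuotientGroup.out_eq' 1
      set σ : Subgroup.center H := ⟨(1 : Q).out, hs⟩ with hσ
      have t1 : LinearMap.trace ℂ π'.carrier (π'.ρ (1 : Q).out)
          = (χ σ : ℂ) * (Module.finrank ℂ π'.carrier : ℂ) := by
        have : π'.ρ (1 : Q).out = (χ σ : ℂ) • (1 : π'.carrier →ₗ[ℂ] π'.carrier) := hres' σ
        rw [this, map_smul, LinearMap.trace_one, smul_eq_mul]
      have t2 : LinearMap.trace ℂ π.carrier (π.ρ ((1 : Q).out⁻¹))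
          = ((χ σ : ℂ))⁻¹ * (Module.finrank ℂ π.carrier : ℂ) := by
        have hcoe : (1 : Q).out⁻¹ = ((σ⁻¹ : Subgroup.center H) : H) := rfl
        rw [hcoe, hres σ⁻¹, map_smul, LinearMap.trace_one, smul_eq_mul, map_inv,
          Units.val_inv_eq_inv_val]
      rw [tA, t1, t2]
      field_simp
    · intro c _ hc
      have hout : c.out ∉ Subgroup.center H := by
        intro hmem
        exact hc (by rw [← QuotientGroup.out_eq' c, QuotientGroup.eq_one_iff]; exact hmem)
      have hout' : c.out⁻¹ ∉ Subgroup.center H := by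
        intro hmem
        exact hout (by simpa using inv_mem hmem)
      rw [tA, trace_vanish z hcomm π hgen _ hout', mul_zero]
    · intro hmem
      exact absurd (Finset.mem_univ _) hmem
  -- the operator is nonzero
  have hPne : P ≠ 0 := by
    intro h0
    rw [h0, map_zero] at htrace
    have d1 : (0 : ℕ) < Module.finrank ℂ π.carrier := Module.finrank_pos
    have d2 : (0 : ℕ) < Module.finrank ℂ π'.carrier := Module.finrank_pos
    have : ((Module.finrank ℂ π'.carrier : ℂ)) * ((Module.finrank ℂ π.carrier : ℂ)) ≠ 0 :=
      mul_ne_zero (Nat.cast_ne_zero.mpr d2.ne') (Nat.cast_ne_zero.mpr d1.ne')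
    exact this htrace.symm
  obtain ⟨S, hS⟩ : ∃ S, P S ≠ 0 := by
    by_contra hcon
    push_neg at hcon
    exact hPne (LinearMap.ext fun S => by rw [hcon S]; rfl)
  refine schur_iso π π' h h' (P S) (fun g x => ?_) hS
  have := LinearMap.congr_fun (hPinv g S) (π.ρ g x)
  simp only [LinearMap.comp_apply] at this
  rw [← this]
  congr 1
  have : π.ρ g⁻¹ (π.ρ g x) = x := by
    rw [← LinearMap.comp_apply, ← Module.End.mul_eq_comp, ← map_mul, inv_mul_cancel, map_one,
      Module.End.one_apply]
  rw [this]

end FinDimRep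
section Induced

variable {H : Type} [Group H]

/-- The induced space: functions transforming by `χ` under left translation by the center. -/
noncomputable def IndSub (χ : Subgroup.center H →* ℂˣ) : Submodule ℂ (H → ℂ) where
  carrier := {f | ∀ (s : Subgroup.center H) (g : H), f ((s : H) * g) = (χ s : ℂ) * f g}
  add_mem' := by
    intro a b ha hb s g
    simp only [Pi.add_apply, ha s g, hb s g]
    ring
  zero_mem' := by intro s g; simp
  smul_mem' := by
    intro c a ha s g
    simp only [Pi.smul_apply, ha s g, smul_eq_mul]
    ring

/-- Right translation. -/
noncomputable def transl (h : H) : (H → ℂ) →ₗ[ℂ] (H → ℂ) where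
  toFun f := fun g => f (g * h)
  map_add' := fun a b => rfl
  map_smul' := fun c a => rfl

lemma transl_mem {χ : Subgroup.center H →* ℂˣ} (h : H) {f : H → ℂ} (hf : f ∈ IndSub χ) :
    transl h f ∈ IndSub χ := by
  intro s g
  have := hf s (g * h)
  simpa [transl, mul_assoc] using this

/-- The induced representation. -/
noncomputable def indRep (χ : Subgroup.center H →* ℂˣ) : Representation ℂ H (IndSub χ) where
  toFun h := (transl h).restrict (fun f hf => transl_mem h hf)
  map_one' := by
    apply LinearMap.ext
    intro x
    apply Subtype.ext
    funext g
    simp [LinearMap.restrict_apply, transl]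
  map_mul' := by
    intro a b
    apply LinearMap.ext
    intro x
    apply Subtype.ext
    funext g
    simp [LinearMap.restrict_apply, transl, Module.End.mul_eq_comp, mul_assoc]

lemma indRep_finiteDimensional (χ : Subgroup.center H →* ℂˣ)
    (hfin : (Subgroup.center H).FiniteIndex) : FiniteDimensional ℂ (IndSub χ) := by
  haveI := hfin
  haveI : Fintype (H ⧸ Subgroup.center H) := Fintype.ofFinite _
  set ev : IndSub χ →ₗ[ℂ] ((H ⧸ Subgroup.center H) → ℂ) :=
    { toFun := fun x => fun c => x.val c.out
      map_add' := fun a b => rfl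
      map_smul' := fun c a => rfl } with hev
  have hinj : Function.Injective ev := by
    intro x y hxy
    apply Subtype.ext
    funext g
    have h1 : (QuotientGroup.mk g : H ⧸ Subgroup.center H).out⁻¹ * g ∈ Subgroup.center H := by
      apply QuotientGroup.eq.mp
      rw [QuotientGroup.out_eq']
    set σ : Subgroup.center H := ⟨(QuotientGroup.mk g : H ⧸ Subgroup.center H).out⁻¹ * g, h1⟩
    have hg : g = (σ : H) * (QuotientGroup.mk g : H ⧸ Subgroup.center H).out := by
      have hc : (QuotientGroup.mk g : H ⧸ Subgroup.center H).out * (σ : H) = (σ : H) * (QuotientGroup.mk g : H ⧸ Subgroup.center H).out :=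
        Subgroup.mem_center_iff.mp σ.2 _
      calc g = (QuotientGroup.mk g : H ⧸ Subgroup.center H).out * ((QuotientGroup.mk g : H ⧸ Subgroup.center H).out⁻¹ * g) := by group
        _ = (σ : H) * (QuotientGroup.mk g : H ⧸ Subgroup.center H).out := by rw [← hc]
    have hevxy := congrFun hxy (QuotientGroup.mk g)
    simp only [hev, LinearMap.coe_mk, AddHom.coe_mk] at hevxy
    rw [hg, x.2 σ, y.2 σ, hevxy]
  exact FiniteDimensional.of_injective ev hinj

end Induced
section Existence

variable {H : Type} [Group H]

/-- Restriction of a representation to an invariant subspace. -/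
noncomputable def FinDimRep.subRep (π : FinDimRep H) (U : Submodule ℂ π.carrier)
    (hU : ∀ (g : H), ∀ x ∈ U, π.ρ g x ∈ U) : FinDimRep H where
  carrier := U
  ρ := { toFun := fun g => (π.ρ g).restrict (fun x hx => hU g x hx)
         map_one' := by
           apply LinearMap.ext
           intro x
           apply Subtype.ext
           simp [LinearMap.restrict_coe_apply]
         map_mul' := by
           intro a b
           apply LinearMap.ext
           intro x
           apply Subtype.ext
           simp [LinearMap.restrict_coe_apply, Module.End.mul_eq_comp] }

lemma FinDimRep.subRep_ρ (π : FinDimRep H) (U : Submodule ℂ π.carrier)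
    (hU : ∀ (g : H), ∀ x ∈ U, π.ρ g x ∈ U) (g : H) :
    (π.subRep U hU).ρ g = (π.ρ g).restrict (fun x hx => hU g x hx) := rfl

lemma exists_irreducible_restrictsTo (χ : Subgroup.center H →* ℂˣ)
    (hfin : (Subgroup.center H).FiniteIndex) :
    ∃ π : FinDimRep H, π.IsIrreducible ∧ π.RestrictsTo χ := by
  classical
  haveI := indRep_finiteDimensional χ hfin
  set V : FinDimRep H := ⟨IndSub χ, indRep χ⟩ with hV
  -- V is nonzero
  set f₀ : H → ℂ := fun g => if hg : g ∈ Subgroup.center H then ((χ ⟨g, hg⟩ : ℂˣ) : ℂ) else 0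
    with hf₀def
  have hf₀ : f₀ ∈ IndSub χ := by
    intro s g
    by_cases hg : g ∈ Subgroup.center H
    · have hsg : (s : H) * g ∈ Subgroup.center H := mul_mem s.2 hg
      have : (⟨(s : H) * g, hsg⟩ : Subgroup.center H) = s * ⟨g, hg⟩ := by
        apply Subtype.ext; rfl
      simp only [hf₀def, dif_pos hg, dif_pos hsg, this, map_mul, Units.val_mul]
    · have hsg : (s : H) * g ∉ Subgroup.center H := by
        intro hmem
        have h2 := mul_mem (inv_mem s.2) hmem
        rw [← mul_assoc, inv_mul_cancel, one_mul] at h2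
        exact hg h2
      simp only [hf₀def, dif_neg hg, dif_neg hsg, mul_zero]
  have hVne : (⊤ : Submodule ℂ V.carrier) ≠ ⊥ := by
    intro htop
    have hmem : (⟨f₀, hf₀⟩ : IndSub χ) ∈ (⊤ : Submodule ℂ V.carrier) := Submodule.mem_top
    rw [htop, Submodule.mem_bot] at hmem
    have h1 := congrArg (fun x => (x : IndSub χ).val 1) hmem
    have hone : (1 : H) ∈ Subgroup.center H := one_mem _
    simp only [hf₀def, dif_pos hone] at h1
    have : (⟨(1 : H), hone⟩ : Subgroup.center H) = 1 := by apply Subtype.ext; rfl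
    rw [this, map_one] at h1
    simpa using h1
  -- V restricts to χ
  have hresV : V.RestrictsTo χ := by
    intro s
    apply LinearMap.ext
    intro x
    apply Subtype.ext
    funext g
    have hcomm : g * (s : H) = (s : H) * g := Subgroup.mem_center_iff.mp s.2 g
    have hval : ((V.ρ (s : H) x : IndSub χ) : H → ℂ) g = x.val (g * (s : H)) := rfl
    rw [hval, hcomm, x.2 s g]
    simp
    rfl
  -- pick a minimal invariant subspace
  set SS : Set ℕ := {d | ∃ U : Submodule ℂ V.carrier,
    (U ≠ ⊥ ∧ ∀ (g : H), ∀ x ∈ U, V.ρ g x ∈ U) ∧ Module.finrank ℂ U = d} with hSS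
  have hSne : SS.Nonempty :=
    ⟨Module.finrank ℂ (⊤ : Submodule ℂ V.carrier), ⊤,
      ⟨hVne, fun g x _ => Submodule.mem_top⟩, rfl⟩
  obtain ⟨U, ⟨hUne, hUinv⟩, hUrank⟩ := Nat.sInf_mem hSne
  refine ⟨V.subRep U hUinv, ⟨?_, ?_⟩, ?_⟩
  · -- nonzero
    obtain ⟨x, hxU, hx⟩ := Submodule.exists_mem_ne_zero_of_ne_bot hUne
    intro htop
    let y : (V.subRep U hUinv).carrier := ⟨x, hxU⟩
    have hmem : y ∈ (⊤ : Submodule ℂ (V.subRep U hUinv).carrier) := Submodule.mem_top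
    rw [htop, Submodule.mem_bot] at hmem
    exact hx (congrArg Subtype.val hmem)
  · -- no proper invariant subspace
    intro W hW
    by_cases hbot : W = ⊥
    · exact Or.inl hbot
    right
    set W' : Submodule ℂ V.carrier := W.map U.subtype with hW'
    have hW'ne : W' ≠ ⊥ := by
      intro hb
      apply hbot
      rw [eq_bot_iff]
      intro x hx
      have hx' : U.subtype x ∈ W' := ⟨x, hx, rfl⟩
      rw [hb, Submodule.mem_bot] at hx'
      rw [Submodule.mem_bot]
      exact Subtype.ext hx'
    have hW'inv : ∀ (g : H), ∀ y ∈ W', V.ρ g y ∈ W' := by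
      intro g y hy
      obtain ⟨x, hxW, rfl⟩ := hy
      refine ⟨(V.subRep U hUinv).ρ g x, hW g x hxW, ?_⟩
      rfl
    have hle : Module.finrank ℂ U ≤ Module.finrank ℂ W' := by
      rw [hUrank]
      exact Nat.sInf_le ⟨W', ⟨hW'ne, hW'inv⟩, rfl⟩
    have heq : Module.finrank ℂ W = Module.finrank ℂ U := by
      have h1 : Module.finrank ℂ W' = Module.finrank ℂ W :=
        Submodule.finrank_map_subtype_eq U W
      have h2 : Module.finrank ℂ W ≤ Module.finrank ℂ U := by
        have := Submodule.finrank_le W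
        exact this
      omega
    exact Submodule.eq_top_of_finrank_eq heq
  · -- restricts to χ
    intro s
    apply LinearMap.ext
    intro x
    apply Subtype.ext
    exact LinearMap.congr_fun (hresV s) (U.subtype x)

end Existence
/-- **Lemma 5.1** of the paper. Let `H` be a group with a central element `z` of order
exactly `2`, all commutators lying in `{1, z}`, and center of finite index. Then for
every genuine character `χ` of `Z(H)` (i.e. `χ(z) = −1`) there is an irreducible
finite-dimensional representation `π(χ)` of `H`, unique up to isomorphism, whose
restriction to `Z(H)` is a multiple of `χ`; every irreducible genuine representation
(i.e. one where `z` acts by `−Id`) restricts to exactly one genuine character; and the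
assignment `χ ↦ π(χ)` is injective up to isomorphism.  Together these say that
`χ ↦ π(χ)` is a bijection from genuine characters of `Z(H)` onto isomorphism classes
of irreducible genuine representations of `H`. -/
theorem genuine_characters_biject_with_genuine_irreducibles
    (H : Type) [Group H] (z : H) (hz : z ∈ Subgroup.center H)
    (hz2 : orderOf z = 2)
    (hcomm : ∀ g h : H, ⁅g, h⁆ ∈ ({1, z} : Set H))
    (hfin : (Subgroup.center H).FiniteIndex) :
    -- existence and uniqueness up to isomorphism of `π(χ)`
    (∀ χ : Subgroup.center H →* ℂˣ, χ ⟨z, hz⟩ = -1 →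
      ∃ π : FinDimRep H, π.IsIrreducible ∧ π.RestrictsTo χ ∧
        ∀ π' : FinDimRep H, π'.IsIrreducible → π'.RestrictsTo χ → π.Iso π') ∧
    -- every irreducible genuine representation restricts to exactly one genuine character
    (∀ π : FinDimRep H, π.IsIrreducible →
      π.ρ z = -(1 : π.carrier →ₗ[ℂ] π.carrier) →
      ∃! χ : Subgroup.center H →* ℂˣ, χ ⟨z, hz⟩ = -1 ∧ π.RestrictsTo χ) ∧
    -- `χ ↦ π(χ)` is injective on isomorphism classes
    (∀ χ χ' : Subgroup.center H →* ℂˣ, χ ⟨z, hz⟩ = -1 → χ' ⟨z, hz⟩ = -1 →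
      ∀ π π' : FinDimRep H, π.IsIrreducible → π.RestrictsTo χ →
        π'.IsIrreducible → π'.RestrictsTo χ' → π.Iso π' → χ = χ') := by
  refine ⟨?_, ?_, ?_⟩
  · -- existence and uniqueness
    intro χ hχ
    obtain ⟨π0, hirr0, hres0⟩ := exists_irreducible_restrictsTo χ hfin
    exact ⟨π0, hirr0, hres0, fun π' h' hres' =>
      FinDimRep.iso_of_restrictsTo z hz hcomm hfin χ hχ π0 π' hirr0 hres0 h' hres'⟩
  · -- unique central character
    intro π hirr hgen
    haveI := π.nontrivial_of_irr hirr
    have hcommute : ∀ (s : Subgroup.center H) (g : H),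
        π.ρ (s : H) ∘ₗ π.ρ g = π.ρ g ∘ₗ π.ρ (s : H) := by
      intro s g
      rw [← Module.End.mul_eq_comp, ← Module.End.mul_eq_comp, ← map_mul, ← map_mul,
        Subgroup.mem_center_iff.mp s.2 g]
    have hsc : ∀ s : Subgroup.center H, ∃ c : ℂ,
        π.ρ (s : H) = c • (1 : π.carrier →ₗ[ℂ] π.carrier) :=
      fun s => π.schur_scalar hirr _ (fun g => hcommute s g)
    choose c hc using hsc
    have hcne : ∀ s, c s ≠ 0 := by
      intro s h0
      have hzero : π.ρ (s : H) = 0 := by rw [hc s, h0, zero_smul]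
      have h1 : π.ρ ((s : H)⁻¹) * π.ρ (s : H) = 1 := by
        rw [← map_mul, inv_mul_cancel, map_one]
      rw [hzero, mul_zero] at h1
      obtain ⟨x, hx⟩ := exists_ne (0 : π.carrier)
      have h2 := LinearMap.congr_fun h1 x
      simp only [LinearMap.zero_apply, Module.End.one_apply] at h2
      exact hx h2.symm
    have hmul : ∀ s t, c (s * t) = c s * c t := by
      intro s t
      apply scalar_unique (M := π.carrier)
      rw [← hc (s * t)]
      have hcoe : ((s * t : Subgroup.center H) : H) = (s : H) * (t : H) := rfl
      rw [hcoe, map_mul, hc s, hc t]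
      ext x
      simp [smul_smul, mul_comm]
    have hone : c 1 = 1 := by
      apply scalar_unique (M := π.carrier)
      rw [← hc 1]
      have : ((1 : Subgroup.center H) : H) = 1 := rfl
      rw [this, map_one]
      ext x
      simp
    set χ₀ : Subgroup.center H →* ℂˣ :=
      { toFun := fun s => Units.mk0 (c s) (hcne s)
        map_one' := Units.ext (by simp [hone])
        map_mul' := fun s t => Units.ext (by simp [hmul]) } with hχ₀
    have hres₀ : π.RestrictsTo χ₀ := by
      intro s
      rw [hc s]
      rfl
    have hcz : c ⟨z, hz⟩ = -1 := by
      apply scalar_unique (M := π.carrier)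
      rw [← hc ⟨z, hz⟩]
      have : ((⟨z, hz⟩ : Subgroup.center H) : H) = z := rfl
      rw [this, hgen]
      ext x
      simp
    refine ⟨χ₀, ⟨Units.ext (by simp [hχ₀, hcz]), hres₀⟩, ?_⟩
    intro χ' ⟨hχ'z, hχ'res⟩
    apply MonoidHom.ext
    intro s
    apply Units.ext
    apply scalar_unique (M := π.carrier)
    rw [← hχ'res s, hc s]
    rfl
  · -- injectivity on isomorphism classes
    rintro χ χ' hχ hχ' π π' hirr hres hirr' hres' ⟨e, he⟩
    haveI := π.nontrivial_of_irr hirr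
    apply MonoidHom.ext
    intro s
    apply Units.ext
    obtain ⟨x, hx⟩ := exists_ne (0 : π.carrier)
    have h1 : e (π.ρ (s : H) x) = π'.ρ (s : H) (e x) := he (s : H) x
    rw [hres s, hres' s] at h1
    simp only [LinearMap.smul_apply, Module.End.one_apply, map_smul] at h1
    have hex : e x ≠ 0 := by
      intro h0
      exact hx (by simpa using e.injective (h0.trans (map_zero e).symm))
    have h2 : ((χ s : ℂ) - (χ' s : ℂ)) • e x = 0 := by
      rw [sub_smul, h1, sub_self]
    rcases smul_eq_zero.mp h2 with h3 | h3
    · exact sub_eq_zero.mp h3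
    · exact absurd h3 hex
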